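/- Let F be a finite field of characteristic p and η(y) = ∑_{i=0}^k a_i y^{p^i} ∈ (F[t])[y] an additive polynomial with a_k ≠ 0 and k ≥ 1 and a_0 ≠ 0. Write η(y) = y·g(y) with g(y) = a_0 + ∑_{i=1}^k a_i y^{p^i−1}. Then the set of monic irreducible Q ∈ F[t] such that g has a root modulo Q is infinite. -/

import Mathlib

open Polynomial Finset

theorem stmt_9 (p : ℕ) [Fact p.Prime] {F : Type*} [Field F] [Fintype F] [CharP F p]
    (k : ℕ) (hk : 1 ≤ k) (a : ℕ → Polynomial F) (hak : a k ≠ 0) (ha0 : a 0 ≠ 0) :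
    {Q : Polynomial F | Q.Monic ∧ Irreducible Q ∧
      ∃ y : Polynomial F, Q ∣ Polynomial.eval y
        (Polynomial.C (a 0) +
          ∑ i ∈ Finset.Icc 1 k, Polynomial.C (a i) * Polynomial.X ^ (p ^ i - 1))}.Infinite := by
  classical
  by_contra hfin
  rw [Set.not_infinite] at hfin
  set S := hfin.toFinset with hSdef
  have hp2 : 2 ≤ p := (Fact.out : p.Prime).two_le
  have hpow2 : ∀ i, 1 ≤ i → 2 ≤ p ^ i := by
    intro i hi
    calc 2 ≤ p := hp2
      _ = p ^ 1 := (pow_one p).symm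
      _ ≤ p ^ i := Nat.pow_le_pow_right (by omega) hi
  -- coefficients c i
  set c : ℕ → Polynomial F := fun i => a i * a 0 ^ (p ^ i - 2) with hc
  set B := (Finset.Icc 1 k).sup (fun i => (c i).natDegree) with hB
  set P : Polynomial F := X ^ (B + 1) * ∏ Q ∈ S, Q with hP
  have hQmonic : ∀ Q ∈ S, Q.Monic := fun Q hQ => (hfin.mem_toFinset.mp hQ).1
  have hPmonic : P.Monic := (monic_X_pow _).mul (monic_prod_of_monic _ _ hQmonic)
  have hPne : P ≠ 0 := hPmonic.ne_zero
  have hD : B + 1 ≤ P.natDegree := by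
    rw [hP, (monic_X_pow _).natDegree_mul (monic_prod_of_monic _ _ hQmonic),
      natDegree_X_pow]
    omega
  set D := P.natDegree with hDdef
  have hD1 : 1 ≤ D := le_trans (by omega) hD
  -- the key polynomial
  set G : Polynomial F := 1 + ∑ i ∈ Finset.Icc 1 k, c i * P ^ (p ^ i - 1) with hG
  have hck : c k ≠ 0 := mul_ne_zero hak (pow_ne_zero _ ha0)
  have hkmem : k ∈ Finset.Icc 1 k := by simp [hk]
  -- degree of the top term
  have htop : ((c k) * P ^ (p ^ k - 1)).natDegree = (c k).natDegree + (p ^ k - 1) * D := by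
    rw [natDegree_mul hck (pow_ne_zero _ hPne), natDegree_pow]
  -- G has positive degree
  have hGdeg : 1 ≤ G.natDegree := by
    have hsplit : G = (1 + ∑ i ∈ (Finset.Icc 1 k).erase k, c i * P ^ (p ^ i - 1))
        + c k * P ^ (p ^ k - 1) := by
      rw [hG, ← Finset.add_sum_erase _ _ hkmem]; ring
    have hRest : (1 + ∑ i ∈ (Finset.Icc 1 k).erase k,
        c i * P ^ (p ^ i - 1)).natDegree < (c k * P ^ (p ^ k - 1)).natDegree := by
      rw [htop]
      have hbound : (∑ i ∈ (Finset.Icc 1 k).erase k,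
          c i * P ^ (p ^ i - 1)).natDegree ≤ B + (p ^ (k - 1) - 1) * D := by
        apply natDegree_sum_le_of_forall_le
        intro i hi
        have hi' := Finset.mem_erase.mp hi
        have hik : i ≤ k - 1 := by
          have := (Finset.mem_Icc.mp hi'.2).2; omega
        have h1 : (c i).natDegree ≤ B := Finset.le_sup (f := fun j => (c j).natDegree) hi'.2
        calc (c i * P ^ (p ^ i - 1)).natDegree
            ≤ (c i).natDegree + (P ^ (p ^ i - 1)).natDegree := natDegree_mul_le
          _ ≤ B + (p ^ (k - 1) - 1) * D := by
              rw [natDegree_pow, hDdef]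
              have : p ^ i ≤ p ^ (k - 1) := Nat.pow_le_pow_right (by omega) hik
              exact Nat.add_le_add h1 (Nat.mul_le_mul_right _ (by omega))
      have hlt : B + (p ^ (k - 1) - 1) * D < (p ^ k - 1) * D := by
        have h1 : p ^ (k - 1) ≤ p ^ k - 1 := by
          have h2 : p ^ k = p * p ^ (k - 1) := by
            conv_lhs => rw [show k = 1 + (k - 1) by omega]
            rw [pow_add, pow_one]
          have h3 : 1 ≤ p ^ (k - 1) := Nat.one_le_pow _ _ (by omega)
          have h4 : 2 * p ^ (k - 1) ≤ p ^ k := by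
            rw [h2]; exact Nat.mul_le_mul_right _ hp2
          omega
        calc B + (p ^ (k - 1) - 1) * D < D + (p ^ (k - 1) - 1) * D := by omega
          _ = p ^ (k - 1) * D := by
              have h3 : 1 ≤ p ^ (k - 1) := Nat.one_le_pow _ _ (by omega)
              cases' Nat.exists_eq_add_of_le h3 with m hm
              rw [hm, Nat.add_sub_cancel_left]; ring
          _ ≤ (p ^ k - 1) * D := Nat.mul_le_mul_right _ h1
      calc (1 + ∑ i ∈ (Finset.Icc 1 k).erase k, c i * P ^ (p ^ i - 1)).natDegree
          ≤ max (1 : Polynomial F).natDegree (∑ i ∈ (Finset.Icc 1 k).erase k,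
              c i * P ^ (p ^ i - 1)).natDegree := natDegree_add_le _ _
        _ ≤ B + (p ^ (k - 1) - 1) * D := by
            simp only [natDegree_one, max_le_iff]
            exact ⟨Nat.zero_le _, hbound⟩
        _ < (p ^ k - 1) * D := hlt
        _ ≤ (c k).natDegree + (p ^ k - 1) * D := Nat.le_add_left _ _
    rw [hsplit, natDegree_add_eq_right_of_natDegree_lt hRest, htop]
    have : 1 ≤ p ^ k - 1 := by have := hpow2 k hk; omega
    exact le_trans (Nat.one_le_iff_ne_zero.mpr (by positivity)) (Nat.le_add_left _ _)
  have hGne : G ≠ 0 := by intro h; rw [h] at hGdeg; simp at hGdeg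
  have hGnu : ¬ IsUnit G := fun h => by
    have := natDegree_eq_zero_of_isUnit h; omega
  -- irreducible factor
  obtain ⟨q, hqirr, hqdvd⟩ := WfDvdMonoid.exists_irreducible_factor hGnu hGne
  set Q : Polynomial F := normalize q with hQ
  have hQirr : Irreducible Q := (associated_normalize q).irreducible hqirr
  have hQmon : Q.Monic := monic_normalize hqirr.ne_zero
  have hQdvdG : Q ∣ G := (normalize_dvd_iff).mpr hqdvd
  -- Q divides the evaluation at a0 * P
  have hkey : a 0 * G = Polynomial.eval (a 0 * P)
      (Polynomial.C (a 0) +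
        ∑ i ∈ Finset.Icc 1 k, Polynomial.C (a i) * Polynomial.X ^ (p ^ i - 1)) := by
    rw [eval_add, eval_C, eval_finset_sum, hG]
    rw [mul_add, mul_one, Finset.mul_sum]
    congr 1
    apply Finset.sum_congr rfl
    intro i hi
    have hi1 : 1 ≤ i := (Finset.mem_Icc.mp hi).1
    have h2 : 2 ≤ p ^ i := hpow2 i hi1
    have hcv : c i = a i * a 0 ^ (p ^ i - 2) := rfl
    rw [eval_mul, eval_C, eval_pow, eval_X, hcv, mul_pow,
      show p ^ i - 1 = (p ^ i - 2) + 1 by omega, pow_succ]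
    ring
  have hQmemS : Q ∈ S := by
    rw [hfin.mem_toFinset]
    exact ⟨hQmon, hQirr, a 0 * P, hkey ▸ Dvd.dvd.mul_left hQdvdG (a 0)⟩
  -- contradiction: Q divides P hence divides G - sum = 1
  have hQdvdP : Q ∣ P := Dvd.dvd.mul_left (Finset.dvd_prod_of_mem _ hQmemS) _
  have hQdvdsum : Q ∣ ∑ i ∈ Finset.Icc 1 k, c i * P ^ (p ^ i - 1) := by
    apply Finset.dvd_sum
    intro i hi
    have hi1 : 1 ≤ i := (Finset.mem_Icc.mp hi).1
    have h2 : 2 ≤ p ^ i := hpow2 i hi1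
    exact Dvd.dvd.mul_left (dvd_pow hQdvdP (by omega)) _
  have hQdvd1 : Q ∣ 1 := by
    have : Q ∣ G - ∑ i ∈ Finset.Icc 1 k, c i * P ^ (p ^ i - 1) :=
      dvd_sub hQdvdG hQdvdsum
    simpa [hG] using this
  exact hQirr.not_isUnit (isUnit_of_dvd_one hQdvd1)
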